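/- Let G = (V,E,w) be a weighted graph with positive edge weights, and let R > 0, ε₀ > 0 be reals and ℓ ≥ 1 an integer. Set η = ε₀·R/ℓ and define rounded weights ŵ(e) = ⌈w(e)/η⌉ for each edge e. Then for every walk π in G with at most ℓ edges: (a) if w(π) ≤ 2R, then ŵ(π) ≤ 2ℓ/ε₀ + ℓ; (b) w(π) ≤ η·ŵ(π) always, and if moreover w(π) ≥ R, then η·ŵ(π) ≤ (1+ε₀)·w(π). Here w(π) and ŵ(π) denote the sums over the edges of π (with multiplicity) of w, respectively ŵ. -/

import Mathlib

open scoped ENNReal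

namespace Stmt4

variable {V : Type*}

/-- The weight of a walk: sum of the weights of its edges (with multiplicity). -/
noncomputable def walkWeight (w : V → V → ℝ) {G : SimpleGraph V} {u v : V}
    (p : G.Walk u v) : ℝ :=
  (p.darts.map fun d => w d.toProd.1 d.toProd.2).sum

/-- Rounding scheme of Klein–Sairam: with `η = ε₀·R/ℓ` and
`wHat(e) = ⌈w(e)/η⌉`, every walk `π` with at most `ℓ` edges satisfies:
(a) if `w(π) ≤ 2R` then `wHat(π) ≤ 2ℓ/ε₀ + ℓ`;
(b) `w(π) ≤ η·wHat(π)`, and if moreover `R ≤ w(π)` then `η·wHat(π) ≤ (1+ε₀)·w(π)`. -/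
theorem rounding_scheme (G : SimpleGraph V) (w : V → V → ℝ)
    (hwsymm : ∀ x y, w x y = w y x)
    (hwpos : ∀ x y, G.Adj x y → 0 < w x y)
    (R ε₀ : ℝ) (hR : 0 < R) (hε₀ : 0 < ε₀)
    (ℓ : ℕ) (hℓ : 1 ≤ ℓ)
    (η : ℝ) (hη : η = ε₀ * R / ℓ)
    (wHat : V → V → ℝ) (hwHat : ∀ x y, wHat x y = (⌈w x y / η⌉ : ℤ))
    {u v : V} (π : G.Walk u v) (hlen : π.length ≤ ℓ) :
    (walkWeight w π ≤ 2 * R → walkWeight wHat π ≤ 2 * ℓ / ε₀ + ℓ) ∧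
    walkWeight w π ≤ η * walkWeight wHat π ∧
    (R ≤ walkWeight w π → η * walkWeight wHat π ≤ (1 + ε₀) * walkWeight w π) := by
  have hℓpos : (0:ℝ) < ℓ := by exact_mod_cast Nat.lt_of_lt_of_le Nat.zero_lt_one hℓ
  have hℓne : (ℓ:ℝ) ≠ 0 := ne_of_gt hℓpos
  have hηpos : 0 < η := by rw [hη]; exact div_pos (mul_pos hε₀ hR) hℓpos
  have hlen' : ((π.darts.length : ℕ) : ℝ) ≤ (ℓ:ℝ) := by
    rw [SimpleGraph.Walk.length_darts]; exact_mod_cast hlen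
  -- pointwise bounds
  have key1 : ∀ d ∈ π.darts, w d.toProd.1 d.toProd.2 ≤ η * wHat d.toProd.1 d.toProd.2 := by
    intro d _
    rw [hwHat]
    have h := Int.le_ceil (w d.toProd.1 d.toProd.2 / η)
    calc w d.toProd.1 d.toProd.2 = η * (w d.toProd.1 d.toProd.2 / η) := by
          field_simp
      _ ≤ η * (⌈w d.toProd.1 d.toProd.2 / η⌉ : ℤ) := by
          exact mul_le_mul_of_nonneg_left h (le_of_lt hηpos)
  have key2 : ∀ d ∈ π.darts, η * wHat d.toProd.1 d.toProd.2 ≤ w d.toProd.1 d.toProd.2 + η := by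
    intro d _
    rw [hwHat]
    have h := (Int.ceil_lt_add_one (w d.toProd.1 d.toProd.2 / η)).le
    calc η * (⌈w d.toProd.1 d.toProd.2 / η⌉ : ℤ)
        ≤ η * (w d.toProd.1 d.toProd.2 / η + 1) :=
          mul_le_mul_of_nonneg_left h (le_of_lt hηpos)
      _ = w d.toProd.1 d.toProd.2 + η := by field_simp
  -- sum bounds
  have hmul : η * walkWeight wHat π
      = (π.darts.map fun d => η * wHat d.toProd.1 d.toProd.2).sum := by
    unfold walkWeight
    induction π.darts with
    | nil => simp
    | cons a l ih => simp [ih, mul_add]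
  have h1 : walkWeight w π ≤ η * walkWeight wHat π := by
    rw [hmul]
    exact List.sum_le_sum key1
  have h2 : η * walkWeight wHat π ≤ walkWeight w π + η * π.darts.length := by
    rw [hmul]
    have := List.sum_le_sum key2
    calc (π.darts.map fun d => η * wHat d.toProd.1 d.toProd.2).sum
        ≤ (π.darts.map fun d => w d.toProd.1 d.toProd.2 + η).sum := this
      _ = walkWeight w π + η * π.darts.length := by
          unfold walkWeight
          induction π.darts with
          | nil => simp
          | cons a l ih => push_cast; push_cast at ih; rw [List.map_cons, List.map_cons,
              List.sum_cons, List.sum_cons, ih, List.length_cons]; push_cast; ring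
  have hηℓ : η * ℓ = ε₀ * R := by rw [hη]; field_simp
  have h3 : η * walkWeight wHat π ≤ walkWeight w π + ε₀ * R := by
    have : η * (π.darts.length : ℝ) ≤ η * ℓ :=
      mul_le_mul_of_nonneg_left hlen' (le_of_lt hηpos)
    linarith
  refine ⟨?_, h1, ?_⟩
  · intro hW
    rw [← mul_le_mul_iff_right₀ hηpos]
    have heq : η * (2 * ℓ / ε₀ + ℓ) = 2 * R + ε₀ * R := by
      rw [hη]; field_simp
    linarith
  · intro hW
    have : ε₀ * R ≤ ε₀ * walkWeight w π := mul_le_mul_of_nonneg_left hW (le_of_lt hε₀)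
    nlinarith

end Stmt4
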